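/- The map π : ℂ^{2×2} → ℂ³, z ↦ (z₁₁, z₂₂, det z), restricted to the Cartan domain ℛ_{II} of symmetric 2×2 matrices with operator norm less than 1, is a proper holomorphic map onto the tetrablock 𝔼 = {x ∈ ℂ³ : |x₁ − x̄₂x₃| + |x₂ − x̄₁x₃| + |x₃|² < 1}, and its locus (branching) set equals the royal variety 𝒯 = {(x₁, x₂, x₃) ∈ 𝔻³ : x₁x₂ = x₃}. -/

import Mathlib

open Complex Metric Set

noncomputable section

/-- The open unit disc in `ℂ`. -/
def 𝔻 : Set ℂ := Metric.ball 0 1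

/-- `B` is a Blaschke product of degree `m` on the unit disc: a unimodular constant
times a product of `m` Möbius factors. -/
def IsBlaschke (m : ℕ) (B : ℂ → ℂ) : Prop :=
  ∃ (ω : ℂ) (a : Fin m → ℂ), ‖ω‖ = 1 ∧ (∀ j, a j ∈ 𝔻) ∧
    ∀ z ∈ 𝔻, B z = ω * ∏ j, (a j - z) / (1 - (starRingEnd ℂ) (a j) * z)

variable {E : Type*} [NormedAddCommGroup E] [NormedSpace ℂ E]

/-- The interpolation data `lam j ↦ f (lam j)` is extremally solvable (through `f`):
no map holomorphic on a neighbourhood of the closed unit disc with values in `D`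
interpolates `f` at the points `lam j`. -/
def ExtSolv (D : Set E) {m : ℕ} (lam : Fin m → ℂ) (f : ℂ → E) : Prop :=
  ¬ ∃ (U : Set ℂ) (g : ℂ → E), IsOpen U ∧ Metric.closedBall (0 : ℂ) 1 ⊆ U ∧
      DifferentiableOn ℂ g U ∧ (∀ z ∈ U, g z ∈ D) ∧ ∀ j, g (lam j) = f (lam j)

/-- `f : 𝔻 → D` is a weak `m`-extremal with respect to the distinct points `lam`. -/
def IsWeakExtremal (D : Set E) {m : ℕ} (lam : Fin m → ℂ) (f : ℂ → E) : Prop :=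
  DifferentiableOn ℂ f 𝔻 ∧ (∀ z ∈ 𝔻, f z ∈ D) ∧ ExtSolv D lam f

/-- `f : 𝔻 → D` is `m`-extremal: for all choices of `m` distinct points of `𝔻` the
corresponding interpolation data is extremally solvable. -/
def IsMExtremal (D : Set E) (m : ℕ) (f : ℂ → E) : Prop :=
  DifferentiableOn ℂ f 𝔻 ∧ (∀ z ∈ 𝔻, f z ∈ D) ∧
    ∀ lam : Fin m → ℂ, Function.Injective lam → (∀ j, lam j ∈ 𝔻) → ExtSolv D lam f

/-- The Minkowski functional of a set `D`. -/
def mink (D : Set E) (z : E) : ℝ := sInf {t : ℝ | 0 < t ∧ ((t : ℂ))⁻¹ • z ∈ D}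

/-- `φ` is a holomorphic automorphism of `D`. -/
def IsAutomorphismOf (D : Set E) (φ : E → E) : Prop :=
  DifferentiableOn ℂ φ D ∧ Set.MapsTo φ D D ∧
    ∃ ψ : E → E, DifferentiableOn ℂ ψ D ∧ Set.MapsTo ψ D D ∧
      (∀ z ∈ D, ψ (φ z) = z) ∧ (∀ z ∈ D, φ (ψ z) = z)

/-- The group of holomorphic automorphisms of `D` acts transitively. -/
def Homogeneous (D : Set E) : Prop :=
  ∀ z ∈ D, ∀ w ∈ D, ∃ φ : E → E, IsAutomorphismOf D φ ∧ φ z = w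

/-- `f` is an `m`-complex geodesic of `D`: there is `F ∈ 𝒪(D, 𝔻)` such that `F ∘ f` is a
non-constant Blaschke product of degree at most `m - 1`. -/
def IsComplexGeodesicOfOrder (D : Set E) (m : ℕ) (f : ℂ → E) : Prop :=
  DifferentiableOn ℂ f 𝔻 ∧ (∀ z ∈ 𝔻, f z ∈ D) ∧
    ∃ F : E → ℂ, DifferentiableOn ℂ F D ∧ (∀ z ∈ D, F z ∈ 𝔻) ∧
      ∃ k : ℕ, 1 ≤ k ∧ k ≤ m - 1 ∧ ∃ B : ℂ → ℂ, IsBlaschke k B ∧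
        ∀ z ∈ 𝔻, F (f z) = B z

/-- The sub-mean-value property on circles, for a real function on a subset of `ℂ`. -/
def SubmeanOn (u : ℂ → ℝ) (S : Set ℂ) : Prop :=
  ∀ (c : ℂ) (r : ℝ), 0 < r → Metric.closedBall c r ⊆ S →
    u c ≤ (2 * Real.pi)⁻¹ * ∫ θ in (0:ℝ)..(2 * Real.pi), u (c + r * Complex.exp (θ * Complex.I))

/-- `u` is plurisubharmonic on `D`: upper semicontinuous and submean on every complex line. -/
def PlurisubharmonicOn (u : E → ℝ) (D : Set E) : Prop :=
  UpperSemicontinuousOn u D ∧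
    ∀ (z v : E), SubmeanOn (fun w : ℂ => u (z + w • v)) {w : ℂ | z + w • v ∈ D}

/-- Hartogs pseudoconvexity: `- log dist(·, ∂D)` is plurisubharmonic on `D`. -/
def IsPseudoconvex (D : Set E) : Prop :=
  PlurisubharmonicOn (fun z => - Real.log (Metric.infDist z Dᶜ)) D


attribute [local instance] Matrix.normedAddCommGroup Matrix.normedSpace

/-- The Cartan domain of the second type: symmetric `2 × 2` complex matrices of
operator norm less than `1`. -/
def RII : Set (Matrix (Fin 2) (Fin 2) ℂ) :=
  {z | z.IsSymm ∧ ‖Matrix.toEuclideanCLM (𝕜 := ℂ) z‖ < 1}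

/-- The map `π : z ↦ (z₁₁, z₂₂, det z)`. -/
def tetraPi (z : Matrix (Fin 2) (Fin 2) ℂ) : Fin 3 → ℂ := ![z 0 0, z 1 1, z.det]

/-- The tetrablock. -/
def TetE : Set (Fin 3 → ℂ) :=
  {x | ‖x 0 - (starRingEnd ℂ) (x 1) * x 2‖ + ‖x 1 - (starRingEnd ℂ) (x 0) * x 2‖ + ‖x 2‖ ^ 2 < 1}

/-- The royal variety of the tetrablock. -/
def RoyalT : Set (Fin 3 → ℂ) := {x | x 0 ∈ 𝔻 ∧ x 1 ∈ 𝔻 ∧ x 2 ∈ 𝔻 ∧ x 0 * x 1 = x 2}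

namespace Stmt13Aux

set_option maxHeartbeats 1000000

/-! ### Auxiliary quantities: entries of `1 - z*z` for a symmetric `2×2` matrix -/

/-- `vA a b = 1 - |a|² - |b|²`, a diagonal entry of `1 - z*z` for `z = !![a,b;b,c]`. -/
def vA (a b : ℂ) : ℝ := 1 - ‖a‖^2 - ‖b‖^2

/-- `vD a b c = det (1 - z*z)` for `z = !![a,b;b,c]`. -/
def vD (a b c : ℂ) : ℝ := 1 - ‖a‖^2 - ‖c‖^2 - 2*‖b‖^2 + ‖a*c - b^2‖^2

lemma idvA (a b : ℂ) : vA a b = 1 - ‖a‖^2 - ‖b‖^2 := rfl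

lemma idvD (a b c : ℂ) :
    vD a b c = 1 - ‖a‖^2 - ‖c‖^2 - 2*‖b‖^2 + ‖a*c - b^2‖^2 := rfl

set_option maxHeartbeats 1000000 in
lemma idq (a b c : ℂ) :
    ‖c - (starRingEnd ℂ) a * (a*c - b^2)‖^2 = vA a b ^2 - (1 - ‖a‖^2) * vD a b c := by
  simp only [vA, vD, ← Complex.normSq_eq_norm_sq]
  simp only [Complex.normSq_apply, pow_two, Complex.mul_re, Complex.mul_im,
    Complex.sub_re, Complex.sub_im, Complex.conj_re, Complex.conj_im]
  ring

set_option maxHeartbeats 1000000 in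
lemma idp (a b c : ℂ) :
    ‖a - (starRingEnd ℂ) c * (a*c - b^2)‖^2 = vA c b ^2 - (1 - ‖c‖^2) * vD a b c := by
  simp only [vA, vD, ← Complex.normSq_eq_norm_sq]
  simp only [Complex.normSq_apply, pow_two, Complex.mul_re, Complex.mul_im,
    Complex.sub_re, Complex.sub_im, Complex.conj_re, Complex.conj_im]
  ring

set_option maxHeartbeats 1000000 in
lemma iddet (a b c : ℂ) :
    vD a b c = vA a b * vA c b - ‖(starRingEnd ℂ) a * b + (starRingEnd ℂ) b * c‖^2 := by
  simp only [vA, vD, ← Complex.normSq_eq_norm_sq]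
  simp only [Complex.normSq_apply, pow_two, Complex.mul_re, Complex.mul_im,
    Complex.sub_re, Complex.sub_im, Complex.add_re, Complex.add_im,
    Complex.conj_re, Complex.conj_im]
  ring

lemma idsum (a b c : ℂ) : vA a b + vA c b - vD a b c = 1 - ‖a*c - b^2‖^2 := by
  simp only [vA, vD]; ring

set_option maxHeartbeats 1000000 in
lemma idd (a b c : ℂ) :
    ‖a*c - b^2‖^2 = ‖a‖^2*‖c‖^2 + ‖b‖^2*‖b‖^2 - 2*((starRingEnd ℂ) (a*c) * b^2).re := by
  simp only [← Complex.normSq_eq_norm_sq]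
  simp only [Complex.normSq_apply, pow_two, Complex.mul_re, Complex.mul_im,
    Complex.sub_re, Complex.sub_im, Complex.conj_re, Complex.conj_im]
  ring

set_option maxHeartbeats 1000000 in
lemma idw (a b c : ℂ) :
    ‖(starRingEnd ℂ) a * b + (starRingEnd ℂ) b * c‖^2 + ‖((vA a b : ℝ) : ℂ)‖^2
      - (‖a * ((starRingEnd ℂ) a * b + (starRingEnd ℂ) b * c) + b * ((vA a b :ℝ):ℂ)‖^2
        + ‖b * ((starRingEnd ℂ) a * b + (starRingEnd ℂ) b * c) + c * ((vA a b :ℝ):ℂ)‖^2)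
      = vA a b * vD a b c := by
  simp only [vA, vD, ← Complex.normSq_eq_norm_sq]
  simp only [Complex.normSq_apply, pow_two, Complex.mul_re, Complex.mul_im,
    Complex.sub_re, Complex.sub_im, Complex.add_re, Complex.add_im, Complex.neg_re,
    Complex.neg_im, Complex.conj_re, Complex.conj_im, Complex.ofReal_re, Complex.ofReal_im,
    Complex.one_re, Complex.one_im]
  ring

set_option maxHeartbeats 1000000 in
lemma idcross (a b c x0 x1 : ℂ) :
    ‖a*x0 + b*x1‖^2 + ‖b*x0 + c*x1‖^2
      = (‖a‖^2 + ‖b‖^2)*‖x0‖^2 + (‖b‖^2 + ‖c‖^2)*‖x1‖^2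
        + 2*(((a * (starRingEnd ℂ) b + b * (starRingEnd ℂ) c) * x0 * (starRingEnd ℂ) x1).re) := by
  simp only [← Complex.normSq_eq_norm_sq]
  simp only [Complex.normSq_apply, pow_two, Complex.mul_re, Complex.mul_im,
    Complex.sub_re, Complex.sub_im, Complex.add_re, Complex.add_im,
    Complex.conj_re, Complex.conj_im]
  ring

lemma diag_pos {a b c : ℂ} (hsum : 0 < vA a b + vA c b) (hD : 0 < vD a b c) :
    0 < vA a b ∧ 0 < vA c b := by
  have h := iddet a b c
  have hw : 0 ≤ ‖(starRingEnd ℂ) a * b + (starRingEnd ℂ) b * c‖^2 := sq_nonneg _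
  constructor <;> nlinarith

/-! ### The real-variable inequalities -/

lemma real_forward {p q u v s D t A C Δ : ℝ}
    (hp : 0 ≤ p) (hq : 0 ≤ q) (hs : 0 ≤ s) (hu : 0 ≤ u) (hv : 0 ≤ v) (hD : 0 ≤ D)
    (e1 : u - v*D ≤ p) (e2 : v*D - u ≤ p) (e3 : v - u*D ≤ q) (e4 : u*D - v ≤ q)
    (ht : t ≤ u*v*s)
    (hA : A = 1 - u^2 - s) (hC : C = 1 - v^2 - s)
    (hΔ : Δ = 1 - u^2 - v^2 - 2*s + D^2)
    (hD2 : D^2 = u^2*v^2 + s^2 - 2*t)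
    (hq2 : q^2 = A^2 - (1-u^2)*Δ)
    (hp2 : p^2 = C^2 - (1-v^2)*Δ)
    (h5 : p + q + D^2 < 1) :
    0 < A + C ∧ 0 < Δ := by
  have hD1 : D < 1 := by nlinarith
  have h1pD : (0:ℝ) < 1 + D := by linarith
  have h1mD : (0:ℝ) < 1 - D := by linarith
  have hd1 : u - v < 1 - D := by nlinarith
  have hd2 : v - u < 1 - D := by nlinarith
  have hd3 : u + v < 1 + D := by nlinarith
  have hu1 : u < 1 := by linarith
  have hv1 : v < 1 := by linarith
  have huv : u*v < 1 := by
    calc u*v ≤ 1*v := mul_le_mul_of_nonneg_right hu1.le hv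
    _ = v := one_mul v
    _ < 1 := hv1
  have htb : t ≤ s := by
    have h := mul_le_mul_of_nonneg_right huv.le hs
    rw [one_mul] at h
    linarith
  have hu2 : u^2 < 1 := by
    calc u^2 = u*u := sq u
    _ ≤ 1*u := mul_le_mul_of_nonneg_right hu1.le hu
    _ = u := one_mul u
    _ < 1 := hu1
  have hv2 : v^2 < 1 := by
    calc v^2 = v*v := sq v
    _ ≤ 1*v := mul_le_mul_of_nonneg_right hv1.le hv
    _ = v := one_mul v
    _ < 1 := hv1
  have hprod : (0:ℝ) ≤ 1 - u^2 - v^2 + u^2*v^2 := by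
    have h : (1-u^2)*(1-v^2) = 1 - u^2 - v^2 + u^2*v^2 := by ring
    rw [← h]
    exact mul_nonneg (by linarith) (by linarith)
  have hΔpos : 0 < Δ := by
    by_contra hcon
    push_neg at hcon
    have hmnn : (0:ℝ) ≤ -Δ := by linarith
    have hm4s : -Δ ≤ 4*s := by linarith [sq_nonneg s]
    have key0 : (0:ℝ) ≤ (-Δ)*s - Δ^2/4 := by
      have h : (-Δ)*(s - (-Δ)/4) = (-Δ)*s - Δ^2/4 := by ring
      rw [← h]
      exact mul_nonneg hmnn (by linarith)
    have hq2' : q^2 = A^2 + (A+s)*(-Δ) := by rw [hq2, hA]; ring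
    have hp2' : p^2 = C^2 + (C+s)*(-Δ) := by rw [hp2, hC]; ring
    have hqA : A + (-Δ)/2 ≤ q := by
      have h1 : (A + (-Δ)/2)^2 ≤ q^2 := by
        have expand : (A + (-Δ)/2)^2 = A^2 + A*(-Δ) + Δ^2/4 := by ring
        rw [expand, hq2']
        linarith [key0]
      rcases le_or_gt (A + (-Δ)/2) 0 with h | h
      · linarith
      · exact le_of_pow_le_pow_left₀ two_ne_zero hq h1
    have hpC : C + (-Δ)/2 ≤ p := by
      have h1 : (C + (-Δ)/2)^2 ≤ p^2 := by
        have expand : (C + (-Δ)/2)^2 = C^2 + C*(-Δ) + Δ^2/4 := by ring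
        rw [expand, hp2']
        linarith [key0]
      rcases le_or_gt (C + (-Δ)/2) 0 with h | h
      · linarith
      · exact le_of_pow_le_pow_left₀ two_ne_zero hp h1
    have hsum' : A + C - Δ = 1 - D^2 := by rw [hA, hC, hΔ]; ring
    linarith
  refine ⟨?_, hΔpos⟩
  have hsum' : A + C - Δ = 1 - D^2 := by rw [hA, hC, hΔ]; ring
  nlinarith

lemma real_backward {p q s A C Δ D2 : ℝ}
    (hp : 0 ≤ p) (hq : 0 ≤ q) (hs : 0 ≤ s)
    (hq2 : q^2 = A^2 - (A+s)*Δ) (hp2 : p^2 = C^2 - (C+s)*Δ)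
    (hsum : A + C - Δ = 1 - D2)
    (hA : 0 < A) (hC : 0 < C) (hΔ : 0 < Δ) :
    p + q + D2 < 1 := by
  have hsΔ : 0 ≤ s*Δ := mul_nonneg hs hΔ.le
  have hAD : Δ ≤ A := by nlinarith [sq_nonneg q]
  have hCD : Δ ≤ C := by nlinarith [sq_nonneg p]
  have hqlt : q < A - Δ/2 := by
    have h2 : q^2 < (A - Δ/2)^2 := by nlinarith
    exact lt_of_pow_lt_pow_left₀ 2 (by linarith) h2
  have hplt : p < C - Δ/2 := by
    have h2 : p^2 < (C - Δ/2)^2 := by nlinarith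
    exact lt_of_pow_lt_pow_left₀ 2 (by linarith) h2
  linarith

lemma real_quad {M0 M1 W X Y cr : ℝ} (hX : 0 ≤ X) (hY : 0 ≤ Y) (hW : 0 ≤ W)
    (hM : W^2 ≤ M0*M1) (hsum : 0 ≤ M0 + M1) (hcr : cr ≤ W*(X*Y)) :
    2*cr ≤ M0*X^2 + M1*Y^2 := by
  have hM0 : 0 ≤ M0 := by nlinarith [sq_nonneg W]
  have hM1 : 0 ≤ M1 := by nlinarith [sq_nonneg W]
  rcases eq_or_lt_of_le hM0 with h0 | h0
  · have hWz : W = 0 := by nlinarith [sq_nonneg W]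
    have : cr ≤ 0 := by rw [hWz] at hcr; linarith [hcr]
    nlinarith [mul_nonneg hM1 (sq_nonneg Y), mul_nonneg hM0 (sq_nonneg X)]
  · nlinarith [sq_nonneg (M0*X - W*Y), mul_nonneg (sub_nonneg.2 hM) (sq_nonneg Y),
      mul_nonneg (mul_nonneg hX hY) hW]

/-! ### The key scalar characterisation -/

set_option maxHeartbeats 1000000 in
lemma key (a b c : ℂ) :
    ‖a - (starRingEnd ℂ) c * (a*c - b^2)‖ + ‖c - (starRingEnd ℂ) a * (a*c - b^2)‖
      + ‖a*c - b^2‖^2 < 1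
    ↔ 0 < vA a b + vA c b ∧ 0 < vD a b c := by
  constructor
  · intro h5
    have e1 : ‖a‖ - ‖c‖ * ‖a*c - b^2‖ ≤ ‖a - (starRingEnd ℂ) c * (a*c - b^2)‖ := by
      have h := norm_sub_norm_le a ((starRingEnd ℂ) c * (a*c - b^2))
      rwa [norm_mul, RCLike.norm_conj] at h
    have e2 : ‖c‖ * ‖a*c - b^2‖ - ‖a‖ ≤ ‖a - (starRingEnd ℂ) c * (a*c - b^2)‖ := by
      have h := norm_sub_norm_le ((starRingEnd ℂ) c * (a*c - b^2)) a
      rw [norm_sub_rev] at h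
      rwa [norm_mul, RCLike.norm_conj] at h
    have e3 : ‖c‖ - ‖a‖ * ‖a*c - b^2‖ ≤ ‖c - (starRingEnd ℂ) a * (a*c - b^2)‖ := by
      have h := norm_sub_norm_le c ((starRingEnd ℂ) a * (a*c - b^2))
      rwa [norm_mul, RCLike.norm_conj] at h
    have e4 : ‖a‖ * ‖a*c - b^2‖ - ‖c‖ ≤ ‖c - (starRingEnd ℂ) a * (a*c - b^2)‖ := by
      have h := norm_sub_norm_le ((starRingEnd ℂ) a * (a*c - b^2)) c
      rw [norm_sub_rev] at h
      rwa [norm_mul, RCLike.norm_conj] at h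
    have ht : ((starRingEnd ℂ) (a*c) * b^2).re ≤ ‖a‖*‖c‖*‖b‖^2 := by
      have h := Complex.re_le_norm ((starRingEnd ℂ) (a*c) * b^2)
      rw [norm_mul, RCLike.norm_conj, norm_mul, norm_pow] at h
      linarith [h]
    have hD2 : ‖a*c - b^2‖^2 = ‖a‖^2*‖c‖^2 + (‖b‖^2)^2 - 2*((starRingEnd ℂ) (a*c) * b^2).re := by
      rw [idd]; ring
    exact real_forward (norm_nonneg _) (norm_nonneg _) (sq_nonneg _) (norm_nonneg a)
      (norm_nonneg c) (norm_nonneg _) e1 e2 e3 e4 ht (idvA a b) (idvA c b) (idvD a b c)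
      hD2 (idq a b c) (idp a b c) h5
  · rintro ⟨hsum, hD⟩
    obtain ⟨hA, hC⟩ := diag_pos hsum hD
    have hq2' : ‖c - (starRingEnd ℂ) a * (a*c - b^2)‖^2
        = (vA a b)^2 - (vA a b + ‖b‖^2)*vD a b c := by
      rw [idq, idvA]; ring
    have hp2' : ‖a - (starRingEnd ℂ) c * (a*c - b^2)‖^2
        = (vA c b)^2 - (vA c b + ‖b‖^2)*vD a b c := by
      rw [idp, idvA]; ring
    exact real_backward (norm_nonneg _) (norm_nonneg _) (sq_nonneg _) hq2' hp2'
      (idsum a b c) hA hC hD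

/-! ### Matrix norm characterisation -/

lemma norm_sq_pi (y : EuclideanSpace ℂ (Fin 2)) : ‖y‖^2 = ‖y 0‖^2 + ‖y 1‖^2 := by
  rw [EuclideanSpace.norm_eq, Real.sq_sqrt (by positivity)]
  exact Fin.sum_univ_two _

lemma clm_apply (z : Matrix (Fin 2) (Fin 2) ℂ) (x : EuclideanSpace ℂ (Fin 2)) (i : Fin 2) :
    (Matrix.toEuclideanCLM (𝕜 := ℂ) z) x i = z i 0 * x 0 + z i 1 * x 1 := by
  have h : (Matrix.toEuclideanCLM (𝕜 := ℂ) z) x i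
      = Matrix.toLin' z (WithLp.equiv 2 (Fin 2 → ℂ) x) i := rfl
  rw [h, Matrix.toLin'_apply]
  simp [Matrix.mulVec, dotProduct, Fin.sum_univ_two]

lemma norm_apply_sq (z : Matrix (Fin 2) (Fin 2) ℂ) (x : EuclideanSpace ℂ (Fin 2)) :
    ‖(Matrix.toEuclideanCLM (𝕜 := ℂ) z) x‖^2
      = ‖z 0 0 * x 0 + z 0 1 * x 1‖^2 + ‖z 1 0 * x 0 + z 1 1 * x 1‖^2 := by
  rw [norm_sq_pi, clm_apply, clm_apply]

def ev (x0 x1 : ℂ) : EuclideanSpace ℂ (Fin 2) := (WithLp.equiv 2 (Fin 2 → ℂ)).symm ![x0, x1]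

@[simp] lemma ev_zero (x0 x1 : ℂ) : ev x0 x1 0 = x0 := rfl
@[simp] lemma ev_one (x0 x1 : ℂ) : ev x0 x1 1 = x1 := rfl

set_option maxHeartbeats 1000000 in
lemma mat (z : Matrix (Fin 2) (Fin 2) ℂ) (hsym : z 1 0 = z 0 1) :
    ‖Matrix.toEuclideanCLM (𝕜 := ℂ) z‖ < 1 ↔
      0 < vA (z 0 0) (z 0 1) + vA (z 1 1) (z 0 1) ∧ 0 < vD (z 0 0) (z 0 1) (z 1 1) := by
  constructor
  · intro hT
    have hQ : ∀ x0 x1 : ℂ, ‖z 0 0 * x0 + z 0 1 * x1‖^2 + ‖z 0 1 * x0 + z 1 1 * x1‖^2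
        ≤ ‖Matrix.toEuclideanCLM (𝕜 := ℂ) z‖^2 * (‖x0‖^2 + ‖x1‖^2) := by
      intro x0 x1
      have h1 := (Matrix.toEuclideanCLM (𝕜 := ℂ) z).le_opNorm (ev x0 x1)
      have h2 : ‖(Matrix.toEuclideanCLM (𝕜 := ℂ) z) (ev x0 x1)‖^2
          ≤ (‖Matrix.toEuclideanCLM (𝕜 := ℂ) z‖ * ‖ev x0 x1‖)^2 :=
        pow_le_pow_left₀ (norm_nonneg _) h1 2
      rw [norm_apply_sq, hsym, ev_zero, ev_one, mul_pow, norm_sq_pi, ev_zero, ev_one] at h2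
      exact h2
    have hTnn : (0:ℝ) ≤ ‖Matrix.toEuclideanCLM (𝕜 := ℂ) z‖ := norm_nonneg _
    have hT2 : ‖Matrix.toEuclideanCLM (𝕜 := ℂ) z‖^2 < 1 := by nlinarith
    have hQ10 := hQ 1 0
    have hQ01 := hQ 0 1
    simp only [mul_one, mul_zero, add_zero, zero_add, norm_one, norm_zero] at hQ10 hQ01
    rw [one_pow] at hQ10 hQ01
    have hA : 0 < vA (z 0 0) (z 0 1) := by
      rw [idvA]
      nlinarith [hQ10]
    have hC : 0 < vA (z 1 1) (z 0 1) := by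
      rw [idvA]
      nlinarith [hQ01]
    have hQw := hQ ((starRingEnd ℂ) (z 0 0) * z 0 1 + (starRingEnd ℂ) (z 0 1) * z 1 1)
      ((vA (z 0 0) (z 0 1) : ℝ) : ℂ)
    have hw1 : ‖((vA (z 0 0) (z 0 1) : ℝ) : ℂ)‖^2 = vA (z 0 0) (z 0 1)^2 := by
      rw [Complex.norm_real, Real.norm_eq_abs, _root_.sq_abs]
    have hpos : 0 < ‖((starRingEnd ℂ) (z 0 0) * z 0 1 + (starRingEnd ℂ) (z 0 1) * z 1 1)‖^2
        + ‖((vA (z 0 0) (z 0 1) : ℝ) : ℂ)‖^2 := by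
      rw [hw1]
      nlinarith [sq_nonneg ‖((starRingEnd ℂ) (z 0 0) * z 0 1 + (starRingEnd ℂ) (z 0 1) * z 1 1)‖]
    have hAD : 0 < vA (z 0 0) (z 0 1) * vD (z 0 0) (z 0 1) (z 1 1) := by
      have hidw := idw (z 0 0) (z 0 1) (z 1 1)
      nlinarith [hQw, hpos, hT2]
    have hD : 0 < vD (z 0 0) (z 0 1) (z 1 1) := by
      rcases mul_pos_iff.mp hAD with ⟨_, h⟩ | ⟨h, _⟩
      · exact h
      · linarith
    exact ⟨by linarith, hD⟩
  · rintro ⟨hsum, hD⟩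
    obtain ⟨hA, hC⟩ := diag_pos hsum hD
    have hA1 : vA (z 0 0) (z 0 1) ≤ 1 := by
      rw [idvA]; nlinarith [sq_nonneg ‖z 0 0‖, sq_nonneg ‖z 0 1‖]
    have hC1 : vA (z 1 1) (z 0 1) ≤ 1 := by
      rw [idvA]; nlinarith [sq_nonneg ‖z 1 1‖, sq_nonneg ‖z 0 1‖]
    set S := vA (z 0 0) (z 0 1) + vA (z 1 1) (z 0 1) with hS
    have hSpos : 0 < S := hsum
    set ε := min (vD (z 0 0) (z 0 1) (z 1 1) / S) (S/2) with hε
    have hεpos : 0 < ε := lt_min (div_pos hD hSpos) (by linarith)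
    have hε1 : ε ≤ 1 := le_trans (min_le_right _ _) (by linarith)
    have hεsum : ε * S ≤ vD (z 0 0) (z 0 1) (z 1 1) := by
      have h : ε ≤ vD (z 0 0) (z 0 1) (z 1 1) / S := min_le_left _ _
      calc ε * S ≤ (vD (z 0 0) (z 0 1) (z 1 1) / S) * S :=
            mul_le_mul_of_nonneg_right h hSpos.le
        _ = vD (z 0 0) (z 0 1) (z 1 1) := div_mul_cancel₀ _ (ne_of_gt hSpos)
    have hε2 : 2*ε ≤ S := by
      have h := min_le_right (vD (z 0 0) (z 0 1) (z 1 1) / S) (S/2)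
      rw [← hε] at h
      linarith
    have hWc : ‖z 0 0 * (starRingEnd ℂ) (z 0 1) + z 0 1 * (starRingEnd ℂ) (z 1 1)‖
        = ‖(starRingEnd ℂ) (z 0 0) * z 0 1 + (starRingEnd ℂ) (z 0 1) * z 1 1‖ := by
      rw [← RCLike.norm_conj (z 0 0 * (starRingEnd ℂ) (z 0 1) + z 0 1 * (starRingEnd ℂ) (z 1 1))]
      congr 1
      simp only [map_add, map_mul, Complex.conj_conj]
    have hW2 : ‖z 0 0 * (starRingEnd ℂ) (z 0 1) + z 0 1 * (starRingEnd ℂ) (z 1 1)‖^2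
        = vA (z 0 0) (z 0 1) * vA (z 1 1) (z 0 1) - vD (z 0 0) (z 0 1) (z 1 1) := by
      rw [hWc]
      linarith [iddet (z 0 0) (z 0 1) (z 1 1)]
    have claim : ∀ x0 x1 : ℂ, ‖z 0 0 * x0 + z 0 1 * x1‖^2 + ‖z 0 1 * x0 + z 1 1 * x1‖^2
        ≤ (1-ε)*(‖x0‖^2 + ‖x1‖^2) := by
      intro x0 x1
      rw [idcross]
      have hcr : ((z 0 0 * (starRingEnd ℂ) (z 0 1) + z 0 1 * (starRingEnd ℂ) (z 1 1))
            * x0 * (starRingEnd ℂ) x1).re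
          ≤ ‖z 0 0 * (starRingEnd ℂ) (z 0 1) + z 0 1 * (starRingEnd ℂ) (z 1 1)‖
            * (‖x0‖*‖x1‖) := by
        have h := Complex.re_le_norm ((z 0 0 * (starRingEnd ℂ) (z 0 1)
          + z 0 1 * (starRingEnd ℂ) (z 1 1)) * x0 * (starRingEnd ℂ) x1)
        rw [norm_mul, norm_mul, RCLike.norm_conj] at h
        nlinarith [h]
      have hM : ‖z 0 0 * (starRingEnd ℂ) (z 0 1) + z 0 1 * (starRingEnd ℂ) (z 1 1)‖^2
          ≤ (vA (z 0 0) (z 0 1) - ε) * (vA (z 1 1) (z 0 1) - ε) := by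
        rw [hW2]
        nlinarith [hεsum, sq_nonneg ε]
      have hq := real_quad (norm_nonneg x0) (norm_nonneg x1) (norm_nonneg _) hM
        (by linarith) hcr
      have e1 := idvA (z 0 0) (z 0 1)
      have e2 := idvA (z 1 1) (z 0 1)
      nlinarith [hq]
    have hTle : ‖Matrix.toEuclideanCLM (𝕜 := ℂ) z‖ ≤ Real.sqrt (1-ε) := by
      apply ContinuousLinearMap.opNorm_le_bound _ (Real.sqrt_nonneg _)
      intro x
      have h2 : ‖(Matrix.toEuclideanCLM (𝕜 := ℂ) z) x‖^2 ≤ (1-ε)*‖x‖^2 := by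
        rw [norm_apply_sq, hsym, norm_sq_pi]
        exact claim (x 0) (x 1)
      calc ‖(Matrix.toEuclideanCLM (𝕜 := ℂ) z) x‖
          = Real.sqrt (‖(Matrix.toEuclideanCLM (𝕜 := ℂ) z) x‖^2) :=
            (Real.sqrt_sq (norm_nonneg _)).symm
        _ ≤ Real.sqrt ((1-ε)*‖x‖^2) := Real.sqrt_le_sqrt h2
        _ = Real.sqrt (1-ε) * Real.sqrt (‖x‖^2) := Real.sqrt_mul (by linarith) _
        _ = Real.sqrt (1-ε) * ‖x‖ := by rw [Real.sqrt_sq (norm_nonneg _)]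
    have hlt : Real.sqrt (1-ε) < 1 := by
      have h := Real.sqrt_lt_sqrt (by linarith : (0:ℝ) ≤ 1-ε) (by linarith : 1-ε < 1)
      rwa [Real.sqrt_one] at h
    linarith

/-! ### Membership characterisations -/

lemma mem_TetE_iff_matrix (z : Matrix (Fin 2) (Fin 2) ℂ) (hba : z 1 0 = z 0 1) :
    tetraPi z ∈ TetE ↔
      (0 < vA (z 0 0) (z 0 1) + vA (z 1 1) (z 0 1) ∧ 0 < vD (z 0 0) (z 0 1) (z 1 1)) := by
  have hdet : z.det = z 0 0 * z 1 1 - (z 0 1)^2 := by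
    rw [Matrix.det_fin_two, hba]; ring
  have h1 : tetraPi z ∈ TetE ↔
      ‖z 0 0 - (starRingEnd ℂ) (z 1 1) * z.det‖ + ‖z 1 1 - (starRingEnd ℂ) (z 0 0) * z.det‖
        + ‖z.det‖^2 < 1 := by
    simp [TetE, tetraPi]
  rw [h1, hdet]
  exact key (z 0 0) (z 0 1) (z 1 1)

lemma mem_RII_iff (z : Matrix (Fin 2) (Fin 2) ℂ) (hsym : z.IsSymm) :
    z ∈ RII ↔ tetraPi z ∈ TetE := by
  have hba : z 1 0 = z 0 1 := hsym.apply 0 1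
  rw [mem_TetE_iff_matrix z hba]
  constructor
  · rintro ⟨_, h⟩
    exact (mat z hba).mp h
  · intro h
    exact ⟨hsym, (mat z hba).mpr h⟩

lemma entry_bounds {z : Matrix (Fin 2) (Fin 2) ℂ} (hz : z ∈ RII) : ∀ i j, ‖z i j‖ ≤ 1 := by
  obtain ⟨hsym, hnorm⟩ := hz
  have hba : z 1 0 = z 0 1 := hsym.apply 0 1
  obtain ⟨hsum, hD⟩ := (mat z hba).mp hnorm
  obtain ⟨hA, hC⟩ := diag_pos hsum hD
  rw [idvA] at hA hC
  have h00 : ‖z 0 0‖ ≤ 1 := by nlinarith [norm_nonneg (z 0 0), sq_nonneg ‖z 0 1‖]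
  have h01 : ‖z 0 1‖ ≤ 1 := by nlinarith [norm_nonneg (z 0 1), sq_nonneg ‖z 0 0‖]
  have h11 : ‖z 1 1‖ ≤ 1 := by nlinarith [norm_nonneg (z 1 1), sq_nonneg ‖z 0 1‖]
  have h10 : ‖z 1 0‖ ≤ 1 := by rw [hba]; exact h01
  intro i j
  fin_cases i <;> fin_cases j
  · exact h00
  · exact h01
  · exact h10
  · exact h11

lemma norm_lt_one_of_RII {z : Matrix (Fin 2) (Fin 2) ℂ} (hz : z ∈ RII) :
    ‖z 0 0‖ < 1 ∧ ‖z 0 1‖ < 1 ∧ ‖z 1 1‖ < 1 := by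
  obtain ⟨hsym, hnorm⟩ := hz
  have hba : z 1 0 = z 0 1 := hsym.apply 0 1
  obtain ⟨hsum, hD⟩ := (mat z hba).mp hnorm
  obtain ⟨hA, hC⟩ := diag_pos hsum hD
  rw [idvA] at hA hC
  refine ⟨?_, ?_, ?_⟩
  · nlinarith [norm_nonneg (z 0 0), sq_nonneg ‖z 0 1‖]
  · nlinarith [norm_nonneg (z 0 1), sq_nonneg ‖z 0 0‖]
  · nlinarith [norm_nonneg (z 1 1), sq_nonneg ‖z 0 1‖]

end Stmt13Aux

set_option maxHeartbeats 1000000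

theorem stmt13 :
    (∀ z ∈ RII, tetraPi z ∈ TetE) ∧
    Differentiable ℂ tetraPi ∧
    tetraPi '' RII = TetE ∧
    (∀ K : Set (Fin 3 → ℂ), K ⊆ TetE → IsCompact K → IsCompact (RII ∩ tetraPi ⁻¹' K)) ∧
    {x | x ∈ TetE ∧ ∃! z, z ∈ RII ∧ tetraPi z = x} = RoyalT := by
  -- differentiability
  have hdiff : Differentiable ℂ tetraPi := by
    refine differentiable_pi.2 ?_
    intro i
    have h : ∀ (k l : Fin 2), Differentiable ℂ (fun z : Matrix (Fin 2) (Fin 2) ℂ => z k l) :=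
      fun k l => by
        have := (differentiable_apply (𝕜 := ℂ) (F' := fun _ : Fin 2 => ℂ) l).comp
          (differentiable_apply (𝕜 := ℂ) (F' := fun _ : Fin 2 => Fin 2 → ℂ) k)
        exact this
    fin_cases i
    · exact h 0 0
    · exact h 1 1
    · have heq : (fun z : Matrix (Fin 2) (Fin 2) ℂ => tetraPi z 2)
          = fun z => z 0 0 * z 1 1 - z 0 1 * z 1 0 := by
        funext z
        simp [tetraPi, Matrix.det_fin_two]
      rw [show (fun z : Matrix (Fin 2) (Fin 2) ℂ => tetraPi z ⟨2, by norm_num⟩)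
          = (fun z : Matrix (Fin 2) (Fin 2) ℂ => tetraPi z 2) from rfl, heq]
      exact ((h 0 0).mul (h 1 1)).sub ((h 0 1).mul (h 1 0))
  -- RII maps into the tetrablock
  have hsub : ∀ z ∈ RII, tetraPi z ∈ TetE := fun z hz => (Stmt13Aux.mem_RII_iff z hz.1).mp hz
  -- surjectivity construction
  have hsurj : ∀ x ∈ TetE, ∃ b : ℂ, b^2 = x 0 * x 1 - x 2 ∧
      (!![x 0, b; b, x 1]) ∈ RII ∧ tetraPi (!![x 0, b; b, x 1]) = x := by
    intro x hx
    obtain ⟨b, hb⟩ := IsAlgClosed.exists_pow_nat_eq (x 0 * x 1 - x 2) (n := 2) (by norm_num)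
    have hsymm : (!![x 0, b; b, x 1]).IsSymm := by
      rw [Matrix.IsSymm.ext_iff]
      intro i j
      fin_cases i <;> fin_cases j <;> simp
    have hdet : (!![x 0, b; b, x 1]).det = x 2 := by
      rw [Matrix.det_fin_two_of]
      linear_combination -hb
    have hpi : tetraPi (!![x 0, b; b, x 1]) = x := by
      funext i
      fin_cases i
      · simp [tetraPi]
      · simp [tetraPi]
      · simpa [tetraPi] using hdet
    exact ⟨b, hb, (Stmt13Aux.mem_RII_iff _ hsymm).mpr (by rw [hpi]; exact hx), hpi⟩
  -- image equality
  have himg : tetraPi '' RII = TetE := by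
    apply Set.Subset.antisymm
    · rintro y ⟨z, hz, rfl⟩
      exact hsub z hz
    · intro x hx
      obtain ⟨b, _, hR, hpi⟩ := hsurj x hx
      exact ⟨_, hR, hpi⟩
  -- properness
  have hproper : ∀ K : Set (Fin 3 → ℂ), K ⊆ TetE → IsCompact K →
      IsCompact (RII ∩ tetraPi ⁻¹' K) := by
    intro K hK hKc
    have hEq : RII ∩ tetraPi ⁻¹' K = {z | z.IsSymm} ∩ tetraPi ⁻¹' K := by
      ext z
      simp only [Set.mem_inter_iff, Set.mem_preimage, Set.mem_setOf_eq]
      constructor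
      · rintro ⟨hz, hk⟩
        exact ⟨hz.1, hk⟩
      · rintro ⟨hsym, hk⟩
        exact ⟨(Stmt13Aux.mem_RII_iff z hsym).mpr (hK hk), hk⟩
    rw [hEq]
    refine IsCompact.of_isClosed_subset (isCompact_closedBall 0 1) ?_ ?_
    · exact IsClosed.inter (isClosed_eq continuous_id.matrix_transpose continuous_id)
        (hKc.isClosed.preimage hdiff.continuous)
    · rintro z ⟨hsym, hk⟩
      have hzR : z ∈ RII := (Stmt13Aux.mem_RII_iff z hsym).mpr (hK hk)
      rw [Metric.mem_closedBall, dist_zero_right,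
        Matrix.norm_le_iff (by norm_num : (0:ℝ) ≤ 1)]
      intro i
      intro j
      exact Stmt13Aux.entry_bounds hzR i j
  -- the locus of injectivity
  have hlocus : {x | x ∈ TetE ∧ ∃! z, z ∈ RII ∧ tetraPi z = x} = RoyalT := by
    ext x
    simp only [Set.mem_setOf_eq, RoyalT]
    constructor
    · rintro ⟨hxT, z, ⟨hzR, hpiz⟩, huni⟩
      have hsym := hzR.1
      have hba : z 1 0 = z 0 1 := hsym.apply 0 1
      have hx0 : z 0 0 = x 0 := by rw [← hpiz]; simp [tetraPi]
      have hx1 : z 1 1 = x 1 := by rw [← hpiz]; simp [tetraPi]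
      have hx2 : z.det = x 2 := by rw [← hpiz]; simp [tetraPi]
      have hsym' : (!![z 0 0, -(z 0 1); -(z 0 1), z 1 1]).IsSymm := by
        rw [Matrix.IsSymm.ext_iff]
        intro i j
        fin_cases i <;> fin_cases j <;> simp
      have hdet' : (!![z 0 0, -(z 0 1); -(z 0 1), z 1 1]).det = z.det := by
        rw [Matrix.det_fin_two_of, Matrix.det_fin_two, hba]
        ring
      have hpi' : tetraPi (!![z 0 0, -(z 0 1); -(z 0 1), z 1 1]) = x := by
        funext i
        fin_cases i
        · simpa [tetraPi] using hx0
        · simpa [tetraPi] using hx1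
        · simpa [tetraPi, hdet'] using hx2
      have hz'R : (!![z 0 0, -(z 0 1); -(z 0 1), z 1 1]) ∈ RII :=
        (Stmt13Aux.mem_RII_iff _ hsym').mpr (by rw [hpi']; exact hxT)
      have hzz := huni _ ⟨hz'R, hpi'⟩
      have hb0 : z 0 1 = 0 := by
        have h := congrFun (congrFun hzz.symm 0) 1
        have e : (!![z 0 0, -(z 0 1); -(z 0 1), z 1 1]) 0 1 = -(z 0 1) := by simp
        rw [e] at h
        linear_combination h/2
      obtain ⟨hu, _, hv⟩ := Stmt13Aux.norm_lt_one_of_RII hzR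
      rw [hx0] at hu
      rw [hx1] at hv
      have hxx : x 0 * x 1 = x 2 := by
        rw [← hx0, ← hx1, ← hx2, Matrix.det_fin_two, hba, hb0]
        ring
      have h2n : ‖x 2‖ < 1 := by
        rw [← hxx, norm_mul]
        nlinarith [norm_nonneg (x 0), norm_nonneg (x 1)]
      exact ⟨mem_ball_zero_iff.mpr hu, mem_ball_zero_iff.mpr hv,
        mem_ball_zero_iff.mpr h2n, hxx⟩
    · rintro ⟨h0, h1, h2, heq⟩
      have hu : ‖x 0‖ < 1 := mem_ball_zero_iff.mp h0
      have hv : ‖x 1‖ < 1 := mem_ball_zero_iff.mp h1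
      have hu2 : ‖x 0‖^2 < 1 := by nlinarith [norm_nonneg (x 0)]
      have hv2 : ‖x 1‖^2 < 1 := by nlinarith [norm_nonneg (x 1)]
      have hsymm : (!![x 0, 0; 0, x 1]).IsSymm := by
        rw [Matrix.IsSymm.ext_iff]
        intro i j
        fin_cases i <;> fin_cases j <;> simp
      have hdet : (!![x 0, 0; 0, x 1]).det = x 2 := by
        rw [Matrix.det_fin_two_of, ← heq]
        ring
      have hpi : tetraPi (!![x 0, 0; 0, x 1]) = x := by
        funext i
        fin_cases i
        · simp [tetraPi]
        · simp [tetraPi]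
        · simpa [tetraPi] using hdet
      have hzR : (!![x 0, 0; 0, x 1]) ∈ RII := by
        refine ⟨hsymm, (Stmt13Aux.mat _ (by simp)).mpr ?_⟩
        have e00 : (!![x 0, 0; 0, x 1]) 0 0 = x 0 := by simp
        have e01 : (!![x 0, 0; 0, x 1]) 0 1 = 0 := by simp
        have e11 : (!![x 0, 0; 0, x 1]) 1 1 = x 1 := by simp
        rw [e00, e01, e11]
        constructor
        · rw [Stmt13Aux.idvA, Stmt13Aux.idvA]
          simp only [norm_zero]
          nlinarith [hu2, hv2]
        · rw [Stmt13Aux.idvD]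
          have e : (x 0 * x 1 - 0^2 : ℂ) = x 0 * x 1 := by ring
          rw [e, norm_mul]
          simp only [norm_zero]
          nlinarith [mul_pos (by linarith : (0:ℝ) < 1 - ‖x 0‖^2)
            (by linarith : (0:ℝ) < 1 - ‖x 1‖^2)]
      refine ⟨by rw [← hpi]; exact (Stmt13Aux.mem_RII_iff _ hsymm).mp hzR,
        ⟨!![x 0, 0; 0, x 1], ⟨hzR, hpi⟩, ?_⟩⟩
      rintro y ⟨hyR, hypi⟩
      have hysym := hyR.1
      have hyba : y 1 0 = y 0 1 := hysym.apply 0 1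
      have hy0 : y 0 0 = x 0 := by rw [← hypi]; simp [tetraPi]
      have hy1 : y 1 1 = x 1 := by rw [← hypi]; simp [tetraPi]
      have hy2 : y.det = x 2 := by rw [← hypi]; simp [tetraPi]
      have hd := Matrix.det_fin_two y
      rw [hyba, hy0, hy1, hy2] at hd
      have hyb : y 0 1 * y 0 1 = 0 := by linear_combination hd + heq
      have hyb0 : y 0 1 = 0 := by
        rcases mul_eq_zero.mp hyb with h | h <;> exact h
      ext i j
      fin_cases i <;> fin_cases j
      · show y 0 0 = !![x 0, 0; 0, x 1] 0 0
        rw [hy0]; simp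
      · show y 0 1 = !![x 0, 0; 0, x 1] 0 1
        rw [hyb0]; simp
      · show y 1 0 = !![x 0, 0; 0, x 1] 1 0
        rw [hyba, hyb0]; simp
      · show y 1 1 = !![x 0, 0; 0, x 1] 1 1
        rw [hy1]; simp
  exact ⟨hsub, hdiff, himg, hproper, hlocus⟩

end
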